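/- In the setting of projections and twists, the ensembles T̄_{n+1}T_{n+1} and T_{n+1}T̄_{n+1} induce the identity maps on C(X)^{⊗n} and C(Y)^{⊗n} respectively, i.e., (T̄_{n+1}T_{n+1})^{(n)} = id and (T_{n+1}T̄_{n+1})^{(n)} = id. -/

import Mathlib

open scoped TensorProduct Classical

noncomputable section

/-- The ℂ-linear span `⟨Y^X⟩` of the set of continuous maps `X → Y` (ensembles). -/
abbrev Ens (X Y : Type) [TopologicalSpace X] [TopologicalSpace Y] : Type :=
  C(X, Y) →₀ ℂ

variable {X Y W : Type} [TopologicalSpace X] [TopologicalSpace Y] [TopologicalSpace W]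

/-- The bilinear extension of composition of maps to ensembles. -/
def Ens.comp (B : Ens Y W) (A : Ens X Y) : Ens X W :=
  B.sum fun b v => A.sum fun a u => Finsupp.single (b.comp a) (v * u)

/-- The identity map `1` as an ensemble. -/
def Ens.one (X : Type) [TopologicalSpace X] : Ens X X :=
  Finsupp.single (ContinuousMap.id X) 1

/-- A single continuous map viewed as an ensemble. -/
def Ens.of (a : C(X, Y)) : Ens X Y := Finsupp.single a 1

/-- The multilinear map underlying `A^{(r)}`, sending `(f₁,…,f_r)` to
`Σᵢ uᵢ (f₁∘aᵢ)⊗⋯⊗(f_r∘aᵢ)`. -/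
def Ens.applM (A : Ens X Y) (r : ℕ) :
    MultilinearMap ℂ (fun _ : Fin r => C(Y, ℂ)) (⨂[ℂ] _ : Fin r, C(X, ℂ)) :=
  A.sum fun a u =>
    u • (PiTensorProduct.tprod ℂ (s := fun _ : Fin r => C(X, ℂ))).compLinearMap
      (fun _ => (ContinuousMap.compRightAlgHom ℂ ℂ a).toLinearMap)

/-- The induced linear map `A^{(r)} : C(Y)^{⊗r} → C(X)^{⊗r}`. -/
def Ens.applL (A : Ens X Y) (r : ℕ) :
    (⨂[ℂ] _ : Fin r, C(Y, ℂ)) →ₗ[ℂ] ⨂[ℂ] _ : Fin r, C(X, ℂ) :=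
  PiTensorProduct.lift (A.applM r)

/-- The restriction `A|_T` of an ensemble to a subset `T ⊆ X`, as an element of the
free ℂ-vector space on the set of maps `T → Y`. -/
def Ens.restr (A : Ens X Y) (T : Set X) : (T → Y) →₀ ℂ :=
  A.sum fun a u => Finsupp.single (fun t : T => a t) u

/-- The ensemble `Zₙ = Π_{i=1}^{n}(1 − pᵢ)` built from a sequence of self-maps. -/
def Ens.Z (p : ℕ → C(X, X)) (n : ℕ) : Ens X X :=
  ((List.range n).map (fun i => Ens.one X - Ens.of (p (i + 1)))).foldr Ens.comp (Ens.one X)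

/-- The ensemble `Tₙ = Σ_{i=1}^{n} Z̄_{i−1} hᵢ`. -/
def Ens.T (q : ℕ → C(Y, Y)) (h : ℕ → C(X, Y)) (n : ℕ) : Ens X Y :=
  ∑ i ∈ Finset.range n, Ens.comp (Ens.Z q i) (Ens.of (h (i + 1)))

/-- A set of projections and twists connecting topological spaces `X` and `Y`. -/
structure ProjTwist (X Y : Type) [TopologicalSpace X] [TopologicalSpace Y] where
  p : ℕ → C(X, X)
  q : ℕ → C(Y, Y)
  h : ℕ → C(X, Y)
  hb : ℕ → C(Y, X)
  p_idem : ∀ n, (p n).comp (p n) = p n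
  p_comm : ∀ i j, (p i).comp (p j) = (p j).comp (p i)
  q_idem : ∀ n, (q n).comp (q n) = q n
  q_comm : ∀ i j, (q i).comp (q j) = (q j).comp (q i)
  p_mov : ∀ i j, i ≠ j → Disjoint {x | p i x ≠ x} {x | p j x ≠ x}
  q_mov : ∀ i j, i ≠ j → Disjoint {y | q i y ≠ y} {y | q j y ≠ y}
  qh : ∀ i j, (q j).comp (h i) = (h i).comp (p j)
  phb : ∀ i j, (p j).comp (hb i) = (hb i).comp (q j)
  hbh : ∀ i j, (hb j).comp (h i) = (p j).comp (p i)
  hhb : ∀ i j, (h i).comp (hb j) = (q i).comp (q j)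

variable {V : Type} [TopologicalSpace V]

namespace Ens

lemma single_comp (b : C(Y, W)) (v : ℂ) (A : Ens X Y) :
    Ens.comp (Finsupp.single b v) A = A.sum fun a u => Finsupp.single (b.comp a) (v * u) := by
  unfold Ens.comp
  rw [Finsupp.sum_single_index]
  simp

lemma comp_single (B : Ens Y W) (a : C(X, Y)) (u : ℂ) :
    Ens.comp B (Finsupp.single a u) = B.sum fun b v => Finsupp.single (b.comp a) (v * u) := by
  unfold Ens.comp
  congr 1
  ext b v
  rw [Finsupp.sum_single_index]
  simp

lemma single_comp_single (b : C(Y, W)) (a : C(X, Y)) (v u : ℂ) :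
    Ens.comp (Finsupp.single b v : Ens Y W) (Finsupp.single a u)
      = Finsupp.single (b.comp a) (v * u) := by
  rw [single_comp, Finsupp.sum_single_index]
  simp

lemma zero_comp (A : Ens X Y) : Ens.comp (0 : Ens Y W) A = 0 := by
  unfold Ens.comp; exact Finsupp.sum_zero_index

lemma comp_zero (B : Ens Y W) : Ens.comp B (0 : Ens X Y) = 0 := by
  unfold Ens.comp
  simp [Finsupp.sum_zero_index]

lemma add_comp (B₁ B₂ : Ens Y W) (A : Ens X Y) :
    Ens.comp (B₁ + B₂) A = Ens.comp B₁ A + Ens.comp B₂ A := by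
  unfold Ens.comp
  rw [Finsupp.sum_add_index]
  · intro b _; simp
  · intro b _ v₁ v₂
    rw [← Finsupp.sum_add]
    congr 1; ext a u
    rw [add_mul, Finsupp.single_add]

lemma comp_add (B : Ens Y W) (A₁ A₂ : Ens X Y) :
    Ens.comp B (A₁ + A₂) = Ens.comp B A₁ + Ens.comp B A₂ := by
  unfold Ens.comp
  rw [← Finsupp.sum_add]
  congr 1; ext b v
  rw [Finsupp.sum_add_index]
  · intro a _; simp
  · intro a _ u₁ u₂
    rw [mul_add, Finsupp.single_add]

lemma comp_neg (B : Ens Y W) (A : Ens X Y) : Ens.comp B (-A) = -(Ens.comp B A) := by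
  refine eq_neg_of_add_eq_zero_left ?_
  rw [← comp_add, neg_add_cancel, comp_zero]

lemma neg_comp (B : Ens Y W) (A : Ens X Y) : Ens.comp (-B) A = -(Ens.comp B A) := by
  refine eq_neg_of_add_eq_zero_left ?_
  rw [← add_comp, neg_add_cancel, zero_comp]

lemma comp_sub (B : Ens Y W) (A₁ A₂ : Ens X Y) :
    Ens.comp B (A₁ - A₂) = Ens.comp B A₁ - Ens.comp B A₂ := by
  rw [sub_eq_add_neg, comp_add, comp_neg, sub_eq_add_neg]

lemma sub_comp (B₁ B₂ : Ens Y W) (A : Ens X Y) :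
    Ens.comp (B₁ - B₂) A = Ens.comp B₁ A - Ens.comp B₂ A := by
  rw [sub_eq_add_neg, add_comp, neg_comp, sub_eq_add_neg]

lemma comp_assoc (C : Ens W V) (B : Ens Y W) (A : Ens X Y) :
    Ens.comp (Ens.comp C B) A = Ens.comp C (Ens.comp B A) := by
  induction C using Finsupp.induction_linear with
  | zero => simp [zero_comp]
  | add f g hf hg => rw [add_comp, add_comp, add_comp, hf, hg]
  | single c w =>
    induction B using Finsupp.induction_linear with
    | zero => simp [zero_comp, comp_zero]
    | add f g hf hg => rw [comp_add, add_comp, add_comp, comp_add, hf, hg]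
    | single b v =>
      induction A using Finsupp.induction_linear with
      | zero => simp [comp_zero]
      | add f g hf hg => rw [comp_add, comp_add, comp_add, hf, hg]
      | single a u =>
        rw [single_comp_single, single_comp_single, single_comp_single,
          single_comp_single, ContinuousMap.comp_assoc, mul_assoc]

lemma one_comp (A : Ens X Y) : Ens.comp (Ens.one Y) A = A := by
  unfold Ens.one
  rw [single_comp]
  simp [ContinuousMap.id_comp]

lemma comp_one (B : Ens X Y) : Ens.comp B (Ens.one X) = B := by
  unfold Ens.one
  rw [comp_single]
  simp [ContinuousMap.comp_id]

lemma comp_finsetSum {ι : Type*} (B : Ens Y W) (s : Finset ι) (A : ι → Ens X Y) :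
    Ens.comp B (∑ i ∈ s, A i) = ∑ i ∈ s, Ens.comp B (A i) := by
  classical
  induction s using Finset.induction_on with
  | empty => simp [comp_zero]
  | insert a s h ih => rw [Finset.sum_insert h, Finset.sum_insert h, comp_add, ih]

lemma finsetSum_comp {ι : Type*} (s : Finset ι) (B : ι → Ens Y W) (A : Ens X Y) :
    Ens.comp (∑ i ∈ s, B i) A = ∑ i ∈ s, Ens.comp (B i) A := by
  classical
  induction s using Finset.induction_on with
  | empty => simp [zero_comp]
  | insert a s h ih => rw [Finset.sum_insert h, Finset.sum_insert h, add_comp, ih]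

lemma of_comp_of (b : C(Y, W)) (a : C(X, Y)) :
    Ens.comp (Ens.of b) (Ens.of a) = Ens.of (b.comp a) := by
  unfold Ens.of; rw [single_comp_single, one_mul]

end Ens

namespace Ens

lemma foldr_comp_eq (l : List (Ens X X)) (c : Ens X X) :
    l.foldr Ens.comp c = Ens.comp (l.foldr Ens.comp (Ens.one X)) c := by
  induction l with
  | nil => simp [List.foldr, one_comp]
  | cons x l ih =>
    simp only [List.foldr, ih, comp_assoc]

lemma Z_zero (p : ℕ → C(X, X)) : Ens.Z p 0 = Ens.one X := by
  simp [Ens.Z]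

lemma Z_succ (p : ℕ → C(X, X)) (m : ℕ) :
    Ens.Z p (m + 1) = Ens.comp (Ens.Z p m) (Ens.one X - Ens.of (p (m + 1))) := by
  unfold Ens.Z
  rw [List.range_succ, List.map_append, List.foldr_append]
  simp only [List.map_cons, List.map_nil, List.foldr]
  rw [comp_one, foldr_comp_eq]

lemma T_succ (q : ℕ → C(Y, Y)) (h : ℕ → C(X, Y)) (m : ℕ) :
    Ens.T q h (m + 1) = Ens.T q h m + Ens.comp (Ens.Z q m) (Ens.of (h (m + 1))) := by
  unfold Ens.T
  rw [Finset.sum_range_succ]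

variable (PT : ProjTwist X Y)

/-- `h̄ᵢ Z̄ₘ = Zₘ h̄ᵢ` -/
lemma hbZ (j m : ℕ) :
    Ens.comp (Ens.of (PT.hb j)) (Ens.Z PT.q m)
      = Ens.comp (Ens.Z PT.p m) (Ens.of (PT.hb j)) := by
  induction m with
  | zero => rw [Z_zero, Z_zero, comp_one, one_comp]
  | succ m ih =>
    rw [Z_succ, Z_succ, ← comp_assoc, ih, comp_assoc, comp_assoc]
    congr 1
    rw [comp_sub, sub_comp, comp_one, one_comp, of_comp_of, of_comp_of, PT.phb]

/-- `Zₘ` commutes with `pᵢ`. -/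
lemma Zp_comm (i m : ℕ) :
    Ens.comp (Ens.Z PT.p m) (Ens.of (PT.p i))
      = Ens.comp (Ens.of (PT.p i)) (Ens.Z PT.p m) := by
  induction m with
  | zero => rw [Z_zero, comp_one, one_comp]
  | succ m ih =>
    rw [Z_succ, comp_assoc]
    have : Ens.comp (Ens.one X - Ens.of (PT.p (m + 1))) (Ens.of (PT.p i))
        = Ens.comp (Ens.of (PT.p i)) (Ens.one X - Ens.of (PT.p (m + 1))) := by
      rw [sub_comp, comp_sub, one_comp, comp_one, of_comp_of, of_comp_of, PT.p_comm]
    rw [this, ← comp_assoc, ih, comp_assoc]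

/-- `Zₘ pᵢ₊₁ = 0` for `i < m`. -/
lemma Zp_zero (i m : ℕ) (him : i < m) :
    Ens.comp (Ens.Z PT.p m) (Ens.of (PT.p (i + 1))) = 0 := by
  induction m with
  | zero => omega
  | succ m ih =>
    rw [Z_succ, comp_assoc]
    rcases Nat.lt_succ_iff_lt_or_eq.mp him with hlt | heq
    · have : Ens.comp (Ens.one X - Ens.of (PT.p (m + 1))) (Ens.of (PT.p (i + 1)))
          = Ens.comp (Ens.of (PT.p (i + 1))) (Ens.one X - Ens.of (PT.p (m + 1))) := by
        rw [sub_comp, comp_sub, one_comp, comp_one, of_comp_of, of_comp_of, PT.p_comm]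
      rw [this, ← comp_assoc, ih hlt, zero_comp]
    · subst heq
      rw [sub_comp, one_comp, of_comp_of, PT.p_idem, sub_self, comp_zero]

/-- `Zₘ` is idempotent. -/
lemma ZZ (m : ℕ) :
    Ens.comp (Ens.Z PT.p m) (Ens.Z PT.p m) = Ens.Z PT.p m := by
  induction m with
  | zero => rw [Z_zero, comp_one]
  | succ m ih =>
    have hA : Ens.comp (Ens.one X - Ens.of (PT.p (m + 1))) (Ens.Z PT.p m)
        = Ens.comp (Ens.Z PT.p m) (Ens.one X - Ens.of (PT.p (m + 1))) := by
      rw [sub_comp, comp_sub, one_comp, comp_one, Zp_comm]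
    have hAA : Ens.comp (Ens.one X - Ens.of (PT.p (m + 1)))
        (Ens.one X - Ens.of (PT.p (m + 1))) = Ens.one X - Ens.of (PT.p (m + 1)) := by
      simp only [sub_comp, comp_sub, one_comp, comp_one, of_comp_of, PT.p_idem]
      abel
    rw [Z_succ, comp_assoc, ← comp_assoc (Ens.one X - Ens.of (PT.p (m+1))), hA,
      comp_assoc, hAA, ← comp_assoc, ih]

/-- `T̄ₘ Tₘ = 1 - Zₘ`. -/
lemma TbarT_eq (m : ℕ) :
    Ens.comp (Ens.T PT.p PT.hb m) (Ens.T PT.q PT.h m) = Ens.one X - Ens.Z PT.p m := by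
  induction m with
  | zero =>
    show Ens.comp (Ens.T PT.p PT.hb 0) (Ens.T PT.q PT.h 0) = _
    unfold Ens.T
    rw [Finset.sum_range_zero, Finset.sum_range_zero, zero_comp, Z_zero, sub_self]
  | succ m ih =>
    rw [T_succ, T_succ, comp_add, add_comp, add_comp, ih]
    have cross1 : Ens.comp (Ens.T PT.p PT.hb m)
        (Ens.comp (Ens.Z PT.q m) (Ens.of (PT.h (m + 1)))) = 0 := by
      unfold Ens.T
      rw [finsetSum_comp]
      refine Finset.sum_eq_zero fun i hi => ?_
      have hi' : i < m := Finset.mem_range.mp hi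
      rw [comp_assoc, ← comp_assoc (Ens.of (PT.hb (i+1))), hbZ, comp_assoc, of_comp_of,
        PT.hbh, ← of_comp_of, ← comp_assoc (Ens.Z PT.p m),
        Zp_zero PT i m hi', zero_comp, comp_zero]
    have cross2 : Ens.comp (Ens.comp (Ens.Z PT.p m) (Ens.of (PT.hb (m + 1))))
        (Ens.T PT.q PT.h m) = 0 := by
      unfold Ens.T
      rw [comp_finsetSum]
      refine Finset.sum_eq_zero fun j hj => ?_
      have hj' : j < m := Finset.mem_range.mp hj
      rw [comp_assoc, ← comp_assoc (Ens.of (PT.hb (m+1))), hbZ, comp_assoc, of_comp_of,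
        PT.hbh, PT.p_comm, ← of_comp_of, ← comp_assoc (Ens.Z PT.p j), Zp_comm,
        ← comp_assoc (Ens.Z PT.p m), ← comp_assoc (Ens.Z PT.p m) (Ens.of (PT.p (j + 1))),
        Zp_zero PT j m hj', zero_comp, zero_comp]
    have diag : Ens.comp (Ens.comp (Ens.Z PT.p m) (Ens.of (PT.hb (m + 1))))
        (Ens.comp (Ens.Z PT.q m) (Ens.of (PT.h (m + 1))))
        = Ens.Z PT.p m - Ens.Z PT.p (m + 1) := by
      rw [comp_assoc, ← comp_assoc (Ens.of (PT.hb (m+1))), hbZ, comp_assoc, of_comp_of,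
        PT.hbh, PT.p_idem, ← comp_assoc, ZZ]
      have : Ens.of (PT.p (m + 1)) = Ens.one X - (Ens.one X - Ens.of (PT.p (m + 1))) := by
        abel
      rw [this, comp_sub, comp_one, ← Z_succ]
    rw [cross1, cross2, diag]
    abel

end Ens

noncomputable instance piTensorACG {X : Type} [TopologicalSpace X] (n : ℕ) :
    AddCommGroup (⨂[ℂ] _ : Fin n, C(X, ℂ)) :=
  inferInstance

namespace Ens

open PiTensorProduct

lemma applM_eq (A : Ens X Y) (r : ℕ) :
    Ens.applM A r = Finsupp.linearCombination ℂ
      (fun a : C(X, Y) =>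
        (PiTensorProduct.tprod ℂ (s := fun _ : Fin r => C(X, ℂ))).compLinearMap
          (fun _ => (ContinuousMap.compRightAlgHom ℂ ℂ a).toLinearMap)) A :=
  (Finsupp.linearCombination_apply _ _).symm

lemma applL_tprod (A : Ens X Y) (r : ℕ) (f : Fin r → C(Y, ℂ)) :
    Ens.applL A r (PiTensorProduct.tprod ℂ f)
      = A.sum fun a u => u • PiTensorProduct.tprod ℂ (fun k => (f k).comp a) := by
  unfold Ens.applL
  rw [PiTensorProduct.lift.tprod]
  unfold Ens.applM
  rw [Finsupp.sum, MultilinearMap.sum_apply, Finsupp.sum]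
  refine Finset.sum_congr rfl fun a _ => ?_
  simp [MultilinearMap.smul_apply, MultilinearMap.compLinearMap_apply,
    ContinuousMap.compRightAlgHom]

lemma applL_single (a : C(X, Y)) (u : ℂ) (r : ℕ) (f : Fin r → C(Y, ℂ)) :
    Ens.applL (Finsupp.single a u) r (PiTensorProduct.tprod ℂ f)
      = u • PiTensorProduct.tprod ℂ (fun k => (f k).comp a) := by
  rw [applL_tprod, Finsupp.sum_single_index]
  simp

lemma applL_of_tprod (a : C(X, Y)) (r : ℕ) (f : Fin r → C(Y, ℂ)) :
    Ens.applL (Ens.of a) r (PiTensorProduct.tprod ℂ f)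
      = PiTensorProduct.tprod ℂ (fun k => (f k).comp a) := by
  rw [Ens.of, applL_single, one_smul]

lemma applL_zero (r : ℕ) : Ens.applL (0 : Ens X Y) r = 0 := by
  unfold Ens.applL
  rw [applM_eq, map_zero, map_zero]

lemma applL_add (A B : Ens X Y) (r : ℕ) :
    Ens.applL (A + B) r = Ens.applL A r + Ens.applL B r := by
  unfold Ens.applL
  rw [applM_eq, applM_eq, applM_eq, map_add, map_add]

lemma applL_sub (A B : Ens X Y) (r : ℕ) :
    Ens.applL (A - B) r = Ens.applL A r - Ens.applL B r := by
  unfold Ens.applL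
  rw [applM_eq, applM_eq, applM_eq, map_sub, map_sub]

lemma one_applL (r : ℕ) : Ens.applL (Ens.one X) r = LinearMap.id := by
  refine PiTensorProduct.ext (MultilinearMap.ext fun f => ?_)
  simp only [LinearMap.compMultilinearMap_apply, LinearMap.id_apply]
  rw [Ens.one, applL_single, one_smul]
  have : (fun k : Fin r => (f k).comp (ContinuousMap.id X)) = f := by
    funext k; exact ContinuousMap.comp_id _
  rw [this]

lemma comp_applL (B : Ens Y W) (A : Ens X Y) (r : ℕ) :
    Ens.applL (Ens.comp B A) r = (Ens.applL A r) ∘ₗ (Ens.applL B r) := by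
  induction B using Finsupp.induction_linear with
  | zero => rw [zero_comp, applL_zero, applL_zero, LinearMap.comp_zero]
  | add f g hf hg => rw [add_comp, applL_add, applL_add, hf, hg, LinearMap.comp_add]
  | single b v =>
    induction A using Finsupp.induction_linear with
    | zero => rw [comp_zero, applL_zero, applL_zero, LinearMap.zero_comp]
    | add f g hf hg => rw [comp_add, applL_add, applL_add, hf, hg, LinearMap.add_comp]
    | single a u =>
      refine PiTensorProduct.ext (MultilinearMap.ext fun f => ?_)
      simp only [LinearMap.compMultilinearMap_apply, LinearMap.comp_apply]
      rw [single_comp_single, applL_single, applL_single, map_smul, applL_single,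
        smul_smul, mul_comm]
      rfl

end Ens

section Coherence

variable (p : ℕ → C(X, X)) (n : ℕ)

/-- The difference operator `d_i g = g - g ∘ p_i`. -/
def dC (i : ℕ) (g : C(X, ℂ)) : C(X, ℂ) := g - g.comp (p i)

lemma dC_apply (i : ℕ) (g : C(X, ℂ)) (x : X) : dC p i g x = g x - g (p i x) := by
  simp [dC]

/-- The operator `1 - P_i` on the `n`-fold tensor power. -/
def Eop (i : ℕ) : (⨂[ℂ] _ : Fin n, C(X, ℂ)) →ₗ[ℂ] ⨂[ℂ] _ : Fin n, C(X, ℂ) :=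
  LinearMap.id - Ens.applL (Ens.of (p i)) n

/-- Composition of the `Eop`s along a list, head applied first. -/
def cL : List ℕ → ((⨂[ℂ] _ : Fin n, C(X, ℂ)) →ₗ[ℂ] ⨂[ℂ] _ : Fin n, C(X, ℂ))
  | [] => LinearMap.id
  | i :: l => (cL l) ∘ₗ Eop p n i

lemma cL_append (l l' : List ℕ) : cL p n (l ++ l') = (cL p n l') ∘ₗ (cL p n l) := by
  induction l with
  | nil => simp [cL]
  | cons i l ih =>
    show (cL p n (l ++ l')) ∘ₗ Eop p n i = _
    rw [ih, LinearMap.comp_assoc]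
    rfl

/-- The slot expansion of `Eop i` on a pure tensor. -/
lemma Eop_tprod (i : ℕ) (g : Fin n → C(X, ℂ)) :
    Eop p n i (PiTensorProduct.tprod ℂ g)
      = ∑ k : Fin n, PiTensorProduct.tprod ℂ (fun m : Fin n =>
          if (m : ℕ) < (k : ℕ) then (g m).comp (p i)
          else if m = k then dC p i (g m) else g m) := by
  classical
  set G : ℕ → Fin n → C(X, ℂ) := fun j m => if (m : ℕ) < j then (g m).comp (p i) else g m
    with hG
  have h0 : G 0 = g := by funext m; simp [hG]
  have hn : G n = fun m => (g m).comp (p i) := by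
    funext m; simp [hG, m.isLt]
  have hEop : Eop p n i (PiTensorProduct.tprod ℂ g)
      = PiTensorProduct.tprod ℂ (G 0) - PiTensorProduct.tprod ℂ (G n) := by
    rw [h0, hn, Eop, LinearMap.sub_apply, LinearMap.id_apply, Ens.applL_of_tprod]
  rw [hEop, ← Finset.sum_range_sub' (fun j => PiTensorProduct.tprod ℂ (G j)) n,
    ← Fin.sum_univ_eq_sum_range (fun j =>
      PiTensorProduct.tprod ℂ (G j) - PiTensorProduct.tprod ℂ (G (j + 1)))]
  refine Finset.sum_congr rfl fun k _ => ?_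
  have e1 : G (k + 1) = Function.update (G k) k ((g k).comp (p i)) := by
    funext m
    rcases eq_or_ne m k with rfl | hm
    · simp [hG, Function.update_self]
    · rw [Function.update_of_ne hm]
      have : (m : ℕ) < (k : ℕ) + 1 ↔ (m : ℕ) < (k : ℕ) := by
        constructor
        · intro h'
          rcases Nat.lt_succ_iff_lt_or_eq.mp h' with h'' | h''
          · exact h''
          · exact absurd (Fin.ext h'') hm
        · omega
      simp [hG, this]
  have e2 : G k = Function.update (G k) k (g k) := by
    funext m
    rcases eq_or_ne m k with rfl | hm
    · simp [hG, Function.update_self]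
    · rw [Function.update_of_ne hm]
  have e3 : Function.update (G k) k (dC p i (g k)) = fun m : Fin n =>
      if (m : ℕ) < (k : ℕ) then (g m).comp (p i) else if m = k then dC p i (g m) else g m := by
    funext m
    rcases eq_or_ne m k with rfl | hm
    · simp [Function.update_self]
    · rw [Function.update_of_ne hm]
      have hmk : ¬ ((m : ℕ) = (k : ℕ)) := fun h' => hm (Fin.ext h')
      by_cases hlt : (m : ℕ) < (k : ℕ) <;> simp [hG, hlt, hm]
  rw [← e3]
  have hd : dC p i (g k) = g k - (g k).comp (p i) := rfl
  rw [hd, MultilinearMap.map_update_sub, ← e2, ← e1]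

end Coherence

section Main

variable {n : ℕ} {p : ℕ → C(X, X)}

/-- Key pointwise fact: if `v` vanishes wherever `p j` is the identity, and `i ≠ j`,
then `d_i v = 0`. -/
lemma dC_eq_zero (hcomm : ∀ i j, (p i).comp (p j) = (p j).comp (p i))
    (hmov : ∀ i j, i ≠ j → Disjoint {x | p i x ≠ x} {x | p j x ≠ x})
    {i j : ℕ} (hij : i ≠ j) {v : C(X, ℂ)} (hv : ∀ x, p j x = x → v x = 0) :
    dC p i v = 0 := by
  ext x
  rw [dC_apply, ContinuousMap.zero_apply]
  by_cases hx : p i x = x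
  · rw [hx, sub_self]
  · have hjx : p j x = x := by
      by_contra hjx
      exact (Set.disjoint_left.mp (hmov i j hij) hx) hjx
    have h1 : v x = 0 := hv x hjx
    have h2 : p j (p i x) = p i x := by
      have := DFunLike.congr_fun (hcomm j i) x
      simp only [ContinuousMap.comp_apply] at this
      rw [this, hjx]
    rw [h1, hv _ h2, sub_self]

/-- The main induction: a long enough product of the `Eop`s kills every pure tensor. -/
lemma cL_tprod_eq_zero (hcomm : ∀ i j, (p i).comp (p j) = (p j).comp (p i))
    (hmov : ∀ i j, i ≠ j → Disjoint {x | p i x ≠ x} {x | p j x ≠ x}) :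
    ∀ (L : List ℕ) (t : Fin n → Option ℕ) (g : Fin n → C(X, ℂ)),
      L.Nodup →
      (∀ k j, t k = some j → j ∉ L) →
      (∀ k j, t k = some j → ∀ x, p j x = x → g k x = 0) →
      n + 1 ≤ L.length + (Finset.univ.filter fun k => (t k).isSome).card →
      cL p n L (PiTensorProduct.tprod ℂ g) = 0 := by
  intro L
  induction L with
  | nil =>
    intro t g _ _ _ hcard
    exfalso
    have h1 : (Finset.univ.filter fun k => (t k).isSome).card ≤ n := by
      calc (Finset.univ.filter fun k => (t k).isSome).card
        ≤ Finset.univ.card := Finset.card_filter_le _ _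
        _ = n := Finset.card_fin n
    simp only [List.length_nil] at hcard
    omega
  | cons i L' ih =>
    intro t g hnd htL htv hcard
    show cL p n L' (Eop p n i (PiTensorProduct.tprod ℂ g)) = 0
    rw [Eop_tprod, map_sum]
    refine Finset.sum_eq_zero fun k _ => ?_
    set g' : Fin n → C(X, ℂ) := fun m =>
      if (m : ℕ) < (k : ℕ) then (g m).comp (p i) else if m = k then dC p i (g m) else g m
      with hg'
    rcases ht : t k with _ | j
    · -- slot `k` untagged: tag it with `i` and recurse
      refine ih (Function.update t k (some i)) g' ?_ ?_ ?_ ?_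
      · exact hnd.of_cons
      · intro k' j' ht' hmem
        rcases eq_or_ne k' k with heq | hk'
        · rw [heq, Function.update_self] at ht'
          cases ht'
          exact (List.nodup_cons.mp hnd).1 hmem
        · rw [Function.update_of_ne hk'] at ht'
          exact htL k' j' ht' (List.mem_cons_of_mem _ hmem)
      · intro k' j' ht' x hx
        rcases eq_or_ne k' k with heq | hk'
        · rw [heq] at ht' ⊢
          rw [Function.update_self] at ht'
          cases ht'
          have hk : g' k = dC p i (g k) := by simp [hg']
          rw [hk, dC_apply, hx, sub_self]
        · rw [Function.update_of_ne hk'] at ht'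
          have hj'i : j' ≠ i := by
            intro hji
            exact htL k' j' ht' (hji ▸ (List.mem_cons_self : i ∈ i :: L'))
          have hold := htv k' j' ht'
          simp only [hg']
          by_cases hlt : (k' : ℕ) < (k : ℕ)
          · rw [if_pos hlt, ContinuousMap.comp_apply]
            have h2 : p j' (p i x) = p i x := by
              have := DFunLike.congr_fun (hcomm j' i) x
              simp only [ContinuousMap.comp_apply] at this
              rw [this, hx]
            exact hold _ h2
          · rw [if_neg hlt, if_neg hk']
            exact hold x hx
      · have hcount : (Finset.univ.filter fun k' =>
            ((Function.update t k (some i)) k').isSome).card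
            = (Finset.univ.filter fun k' => (t k').isSome).card + 1 := by
          have hset : (Finset.univ.filter fun k' =>
              ((Function.update t k (some i)) k').isSome)
              = insert k (Finset.univ.filter fun k' => (t k').isSome) := by
            ext k'
            simp only [Finset.mem_filter, Finset.mem_insert, Finset.mem_univ, true_and]
            rcases eq_or_ne k' k with rfl | hk'
            · simp [Function.update_self]
            · simp [Function.update_of_ne hk', hk']
          rw [hset, Finset.card_insert_of_notMem]
          simp [ht]
        rw [hcount]
        simp only [List.length_cons] at hcard
        omega
    · -- slot `k` already tagged with `j`: the new entry in slot `k` is zero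
      have hji : i ≠ j := fun hij => htL k j ht (hij ▸ (List.mem_cons_self : i ∈ i :: L'))
      have hzero : g' k = 0 := by
        have hk : g' k = dC p i (g k) := by simp [hg']
        rw [hk]
        exact dC_eq_zero hcomm hmov hji (htv k j ht)
      have hz : PiTensorProduct.tprod ℂ g' = 0 :=
        MultilinearMap.map_coord_zero _ k hzero
      rw [hz]
      exact (cL p n L').map_zero

/-- `Z^{(n)}` as a composition of the `Eop`s. -/
lemma Z_applL_eq_cL (p : ℕ → C(X, X)) (n m : ℕ) :
    Ens.applL (Ens.Z p m) n = cL p n ((List.range m).map (· + 1)) := by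
  induction m with
  | zero => rw [Ens.Z_zero, Ens.one_applL]; rfl
  | succ m ih =>
    rw [Ens.Z_succ, Ens.comp_applL, Ens.applL_sub, Ens.one_applL, ih,
      List.range_succ, List.map_append]
    rw [cL_append]
    rfl

lemma Z_applL_eq_zero (p : ℕ → C(X, X)) (n : ℕ)
    (hcomm : ∀ i j, (p i).comp (p j) = (p j).comp (p i))
    (hmov : ∀ i j, i ≠ j → Disjoint {x | p i x ≠ x} {x | p j x ≠ x}) :
    Ens.applL (Ens.Z p (n + 1)) n = 0 := by
  rw [Z_applL_eq_cL]
  refine PiTensorProduct.ext (MultilinearMap.ext fun f => ?_)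
  simp only [LinearMap.compMultilinearMap_apply, LinearMap.zero_apply]
  refine cL_tprod_eq_zero hcomm hmov _ (fun _ => none) f ?_ ?_ ?_ ?_
  · exact (List.nodup_range).map (fun a b h => by omega)
  · intro k j h; cases h
  · intro k j h; cases h
  · simp

end Main

def ProjTwist.symm {X Y : Type} [TopologicalSpace X] [TopologicalSpace Y]
    (PT : ProjTwist X Y) : ProjTwist Y X :=
  ⟨PT.q, PT.p, PT.hb, PT.h, PT.q_idem, PT.q_comm, PT.p_idem, PT.p_comm, PT.q_mov, PT.p_mov,
    PT.phb, PT.qh, fun i j => PT.hhb j i, fun i j => PT.hbh j i⟩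


/-- In the setting of projections and twists, the ensembles
`T̄_{n+1}T_{n+1}` and `T_{n+1}T̄_{n+1}` induce the identity maps on `C(X)^{⊗n}` and
`C(Y)^{⊗n}` respectively. -/
theorem TbarT_induces_identity {X Y : Type} [TopologicalSpace X] [TopologicalSpace Y]
    (PT : ProjTwist X Y) (n : ℕ) :
    ((Ens.T PT.p PT.hb (n + 1)).comp (Ens.T PT.q PT.h (n + 1))).applL n = LinearMap.id ∧
    ((Ens.T PT.q PT.h (n + 1)).comp (Ens.T PT.p PT.hb (n + 1))).applL n = LinearMap.id := by
  constructor
  · rw [Ens.TbarT_eq PT (n + 1), Ens.applL_sub, Ens.one_applL,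
      Z_applL_eq_zero PT.p n PT.p_comm PT.p_mov, sub_zero]
  · have h2 := Ens.TbarT_eq PT.symm (n + 1)
    simp only [ProjTwist.symm] at h2
    rw [h2, Ens.applL_sub, Ens.one_applL,
      Z_applL_eq_zero PT.q n PT.q_comm PT.q_mov, sub_zero]
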